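/- arXiv:1309.7264 — 2 statements merged into one kernel-verified Lean document; each statement's English description precedes it below -/
import Mathlib

section
/- Let G(R) be a finite connected graph on regular agents R, let S be a set of stubborn agents each connected to all agents of R and all holding the common value a ∈ ℝ. Let x₀^R ∈ ℝ^R with average x̄₀^R, and suppose λ ≥ ‖x₀^R − x̄₀^R·1_R‖_* (dual TV norm on G(R)). Define x* = a if |x̄₀^R − a| ≤ λ|S|; x* = x̄₀^R + λ|S| if x̄₀^R + λ|S| < a; and x* = x̄₀^R − λ|S| if x̄₀^R − λ|S| > a. Then x*·1_R is the unique minimizer over x ∈ ℝ^R of (1/2)‖x − x₀^R‖₂² + λ‖x‖_TV + λ|S|·Σ_{v∈R} |x(v) − a|. -/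
open Finset

noncomputable section

/-- Discrete total variation. -/
def tvNorm {V : Type*} [Fintype V] (G : SimpleGraph V) [DecidableRel G.Adj]
    (x : V → ℝ) : ℝ :=
  (1 / 2) * ∑ v, ∑ w, if G.Adj v w then |x w - x v| else 0

/-- Dual norm of the TV norm on the zero-mean subspace. -/
def dualNorm {V : Type*} [Fintype V] (G : SimpleGraph V) [DecidableRel G.Adj]
    (u : V → ℝ) : ℝ :=
  sSup {r | ∃ x : V → ℝ, (∑ v, x v = 0) ∧ tvNorm G x ≤ 1 ∧ r = ∑ v, x v * u v}

/-- The perturbed objective seen by regular agents when `k` stubborn agents of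
common value `a` are connected to every regular agent. -/
def stubbornObjective {R : Type*} [Fintype R] (G : SimpleGraph R)
    [DecidableRel G.Adj] (x₀ : R → ℝ) (lam a : ℝ) (k : ℕ) (x : R → ℝ) : ℝ :=
  (1 / 2) * ∑ v, (x v - x₀ v) ^ 2 + lam * tvNorm G x
    + lam * (k : ℝ) * ∑ v, |x v - a|

/-- The consensus value reached in the presence of a stubborn coalition of size
`k` with common value `a`: `a` if `|x̄₀ - a| ≤ λk`, otherwise the projection of
`a` onto `[x̄₀ - λk, x̄₀ + λk]`. -/
def stubbornTarget (xbar lam a : ℝ) (k : ℕ) : ℝ :=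
  if |xbar - a| ≤ lam * (k : ℝ) then a
  else if xbar + lam * (k : ℝ) < a then xbar + lam * (k : ℝ)
  else xbar - lam * (k : ℝ)

section aux
variable {V : Type*} [Fintype V] (G : SimpleGraph V) [DecidableRel G.Adj]

lemma tvNorm_nonneg (x : V → ℝ) : 0 ≤ tvNorm G x := by
  unfold tvNorm
  have h : ∀ v ∈ (univ : Finset V), (0:ℝ) ≤ ∑ w, if G.Adj v w then |x w - x v| else 0 :=
    fun v _ => Finset.sum_nonneg fun w _ => by split <;> simp [abs_nonneg]
  have := Finset.sum_nonneg h
  linarith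

lemma tvNorm_edge (x : V → ℝ) {v w : V} (h : G.Adj v w) : |x w - x v| ≤ tvNorm G x := by
  classical
  unfold tvNorm
  rw [← Finset.sum_product']
  have hsub : ({(v, w), (w, v)} : Finset (V × V)) ⊆ univ ×ˢ univ := by
    intro p _; simp
  have hle : ∑ p ∈ ({(v, w), (w, v)} : Finset (V × V)),
        (if G.Adj p.1 p.2 then |x p.2 - x p.1| else 0)
      ≤ ∑ p ∈ univ ×ˢ univ, (if G.Adj p.1 p.2 then |x p.2 - x p.1| else 0) :=
    Finset.sum_le_sum_of_subset_of_nonneg hsub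
      (fun p _ _ => by split <;> simp [abs_nonneg])
  have hne : (v, w) ≠ (w, v) := by
    intro hcontra
    exact h.ne (congrArg Prod.fst hcontra)
  rw [Finset.sum_pair hne] at hle
  simp only [h, h.symm, if_true] at hle
  have : |x v - x w| = |x w - x v| := abs_sub_comm _ _
  linarith

lemma tvNorm_smul (c : ℝ) (x : V → ℝ) :
    tvNorm G (fun v => c * x v) = |c| * tvNorm G x := by
  unfold tvNorm
  have h : ∀ v w : V, (if G.Adj v w then |c * x w - c * x v| else 0)
      = |c| * (if G.Adj v w then |x w - x v| else 0) := by
    intro v w; split_ifs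
    · rw [← abs_mul]; ring_nf
    · ring
  simp only [h, ← Finset.mul_sum]
  ring

lemma tvNorm_sub_const (x : V → ℝ) (c : ℝ) :
    tvNorm G (fun v => x v - c) = tvNorm G x := by
  unfold tvNorm
  congr 1
  refine Finset.sum_congr rfl fun v _ => Finset.sum_congr rfl fun w _ => ?_
  split_ifs <;> ring_nf

lemma tvNorm_const (c : ℝ) : tvNorm G (fun _ : V => c) = 0 := by
  unfold tvNorm; simp

lemma tvNorm_walk (x : V → ℝ) {v w : V} (p : G.Walk v w) :
    |x v - x w| ≤ (p.length : ℝ) * tvNorm G x := by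
  induction p with
  | nil => simp
  | cons h q ih =>
    rename_i v' m w'
    have h1 : |x v' - x m| ≤ tvNorm G x := by
      rw [abs_sub_comm]; exact tvNorm_edge G x h
    calc |x v' - x w'| ≤ |x v' - x m| + |x m - x w'| := abs_sub_le _ _ _
      _ ≤ tvNorm G x + (q.length : ℝ) * tvNorm G x := add_le_add h1 ih
      _ = ((q.length + 1 : ℕ) : ℝ) * tvNorm G x := by push_cast; ring
      _ = _ := by rw [SimpleGraph.Walk.length_cons]

lemma tvNorm_diff (hG : G.Connected) (x : V → ℝ) (v w : V) :
    |x v - x w| ≤ (Fintype.card V : ℝ) * tvNorm G x := by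
  classical
  obtain ⟨p⟩ := hG v w
  have hp := p.toPath
  calc |x v - x w| ≤ ((hp : G.Walk v w).length : ℝ) * tvNorm G x := tvNorm_walk G x _
    _ ≤ (Fintype.card V : ℝ) * tvNorm G x := by
        apply mul_le_mul_of_nonneg_right _ (tvNorm_nonneg G x)
        exact_mod_cast le_of_lt hp.2.length_lt

lemma eq_of_tvNorm_zero (hG : G.Connected) (x : V → ℝ) (h : tvNorm G x = 0)
    (v w : V) : x v = x w := by
  have := tvNorm_diff G hG x v w
  rw [h, mul_zero] at this
  have := abs_nonneg (x v - x w)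
  have : |x v - x w| = 0 := le_antisymm (by linarith) (abs_nonneg _)
  linarith [abs_eq_zero.mp this, sub_eq_zero.mp (abs_eq_zero.mp this)]

end aux

section dual
variable {V : Type*} [Fintype V] (G : SimpleGraph V) [DecidableRel G.Adj]

lemma dual_set_bddAbove (u : V → ℝ) (hG : G.Connected) :
    BddAbove {r | ∃ x : V → ℝ, (∑ v, x v = 0) ∧ tvNorm G x ≤ 1 ∧ r = ∑ v, x v * u v} := by
  have hne : Nonempty V := hG.nonempty
  refine ⟨(Fintype.card V : ℝ) * ∑ v, |u v|, ?_⟩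
  rintro r ⟨x, hx0, htv, rfl⟩
  -- bound each |x v| by card V
  have hb : ∀ v, |x v| ≤ (Fintype.card V : ℝ) := by
    intro v
    obtain ⟨w, hw⟩ : ∃ w, x w ≤ 0 := by
      by_contra hcon
      push_neg at hcon
      have : 0 < ∑ v, x v := Finset.sum_pos (fun v _ => hcon v) univ_nonempty
      linarith [hx0 ▸ this]
    obtain ⟨w', hw'⟩ : ∃ w', 0 ≤ x w' := by
      by_contra hcon
      push_neg at hcon
      have : ∑ v, x v < 0 := Finset.sum_neg (fun v _ => hcon v) univ_nonempty
      linarith [hx0 ▸ this]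
    have h1 : |x v - x w| ≤ (Fintype.card V : ℝ) * tvNorm G x := tvNorm_diff G hG x v w
    have h2 : |x w' - x v| ≤ (Fintype.card V : ℝ) * tvNorm G x := tvNorm_diff G hG x w' v
    have hcard : (0:ℝ) ≤ (Fintype.card V : ℝ) := by positivity
    have hc1 : (Fintype.card V : ℝ) * tvNorm G x ≤ (Fintype.card V : ℝ) :=
      (mul_le_of_le_one_right hcard htv)
    rw [abs_le]
    constructor
    · have := (abs_le.mp h1).2
      have h2' := (abs_le.mp h2).2
      -- x w' - x v ≤ card * tv ≤ card, and x w' ≥ 0 so -x v ≤ card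
      nlinarith [ (abs_le.mp h2).2 ]
    · nlinarith [ (abs_le.mp h1).2 ]
  calc ∑ v, x v * u v ≤ ∑ v, (Fintype.card V : ℝ) * |u v| := by
        apply Finset.sum_le_sum
        intro v _
        calc x v * u v ≤ |x v * u v| := le_abs_self _
          _ = |x v| * |u v| := abs_mul _ _
          _ ≤ (Fintype.card V : ℝ) * |u v| := by
              apply mul_le_mul_of_nonneg_right (hb v) (abs_nonneg _)
    _ = (Fintype.card V : ℝ) * ∑ v, |u v| := by rw [Finset.mul_sum]

lemma sum_mul_le_dual (hG : G.Connected) (u y : V → ℝ) (hy : ∑ v, y v = 0)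
    {lam : ℝ} (hl0 : 0 ≤ lam) (hlam : dualNorm G u ≤ lam) :
    ∑ v, y v * u v ≤ lam * tvNorm G y := by
  have hne : Nonempty V := hG.nonempty
  rcases eq_or_lt_of_le (tvNorm_nonneg G y) with h0 | hpos
  · -- tv = 0 : y constant, zero mean ⇒ y = 0
    have hconst : ∀ v w, y v = y w := eq_of_tvNorm_zero G hG y h0.symm
    have hzero : ∀ v, y v = 0 := by
      intro v
      have : ∑ w, y w = ∑ w : V, y v := Finset.sum_congr rfl fun w _ => (hconst v w).symm
      rw [hy, Finset.sum_const, card_univ] at this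
      have hcard : 0 < (Fintype.card V : ℝ) := by positivity
      have : (Fintype.card V : ℝ) * y v = 0 := by
        rw [nsmul_eq_mul] at this; linarith [this]
      exact (mul_eq_zero.mp this).resolve_left (by positivity)
    have : ∑ v, y v * u v = 0 := by
      apply Finset.sum_eq_zero; intro v _; rw [hzero v]; ring
    rw [this, ← h0, mul_zero]
  · set tv := tvNorm G y with htv
    have htvne : tv ≠ 0 := ne_of_gt hpos
    set z : V → ℝ := fun v => tv⁻¹ * y v with hz
    have hz0 : ∑ v, z v = 0 := by
      simp only [hz, ← Finset.mul_sum, hy, mul_zero]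
    have hztv : tvNorm G z ≤ 1 := by
      rw [hz, tvNorm_smul, abs_of_pos (inv_pos.mpr hpos), ← htv, inv_mul_cancel₀ htvne]
    have hmem : (∑ v, z v * u v) ∈
        {r | ∃ x : V → ℝ, (∑ v, x v = 0) ∧ tvNorm G x ≤ 1 ∧ r = ∑ v, x v * u v} :=
      ⟨z, hz0, hztv, rfl⟩
    have hle : (∑ v, z v * u v) ≤ dualNorm G u :=
      le_csSup (dual_set_bddAbove G u hG) hmem
    have heq : ∑ v, y v * u v = tv * ∑ v, z v * u v := by
      rw [Finset.mul_sum]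
      apply Finset.sum_congr rfl
      intro v _
      field_simp [hz]
      simp only [hz]
      rw [mul_assoc, mul_inv_cancel_left₀ htvne]
      ring
    rw [heq]
    calc tv * ∑ v, z v * u v ≤ tv * lam := by
          apply mul_le_mul_of_nonneg_left (le_trans hle hlam) (le_of_lt hpos)
      _ = lam * tv := mul_comm _ _

end dual

lemma target_min (m a lam : ℝ) (k : ℕ) (ht : 0 ≤ lam * (k:ℝ)) (c : ℝ)
    (hc : c ≠ stubbornTarget m lam a k) :
    (1/2) * (stubbornTarget m lam a k - m)^2
        + lam * (k:ℝ) * |stubbornTarget m lam a k - a|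
      < (1/2) * (c - m)^2 + lam * (k:ℝ) * |c - a| := by
  set t := lam * (k:ℝ) with htdef
  unfold stubbornTarget at hc ⊢
  rw [← htdef] at hc ⊢
  split_ifs at hc ⊢ with h1 h2
  · rcases abs_cases (m - a) with ⟨_, _⟩ | ⟨_, _⟩ <;>
    rcases abs_cases (c - a) with ⟨hca, hca'⟩ | ⟨hca, hca'⟩ <;>
    · rw [hca]
      simp only [sub_self, abs_zero, mul_zero]
      have hcne : c - a ≠ 0 := sub_ne_zero.mpr hc
      rcases lt_or_gt_of_ne hcne with hlt | hgt <;> nlinarith [abs_le.mp h1]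
  · have hkey : (1/2) * (m + t - m)^2 + t * |m + t - a|
        = (1/2) * (c - m)^2 + t * |c - a| - ((1/2) * (c - m - t)^2 + t * (|c - a| - (a - c))) := by
      rw [abs_of_neg (by linarith : m + t - a < 0)]
      ring
    rw [hkey]
    have h2' : 0 < (c - m - t)^2 := by
      have : c - m - t ≠ 0 := fun h => hc (by linarith)
      positivity
    have h3 : 0 ≤ |c - a| - (a - c) := by
      rcases abs_cases (c - a) with ⟨h, _⟩ | ⟨h, _⟩ <;> rw [h] <;> linarith [abs_nonneg (c-a)]
    nlinarith [mul_nonneg ht h3]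
  · have hmta : a < m - t := by
      rcases abs_cases (m - a) with ⟨h, h'⟩ | ⟨h, h'⟩ <;> push_neg at h1 h2 <;> linarith
    have hkey : (1/2) * (m - t - m)^2 + t * |m - t - a|
        = (1/2) * (c - m)^2 + t * |c - a| - ((1/2) * (c - m + t)^2 + t * (|c - a| - (c - a))) := by
      rw [abs_of_pos (by linarith : 0 < m - t - a)]
      ring
    rw [hkey]
    have h2' : 0 < (c - m + t)^2 := by
      have : c - m + t ≠ 0 := by intro h; apply hc; linarith
      positivity
    have h3 : 0 ≤ |c - a| - (c - a) := by linarith [le_abs_self (c - a)]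
    nlinarith [mul_nonneg ht h3]


/-- Robustness of TV consensus to stubborn agents: if
`λ ≥ ‖x₀ - x̄₀ 1‖_*` then the constant vector `x* 1` (with `x*` as above) is
the unique minimizer of the perturbed objective. -/
theorem stubborn_robustness {R : Type*} [Fintype R]
    (G : SimpleGraph R) [DecidableRel G.Adj] (hG : G.Connected)
    (x₀ : R → ℝ) (a lam : ℝ) (k : ℕ) (hlampos : 0 < lam)
    (hlam : dualNorm G (fun v => x₀ v - (∑ w, x₀ w) / (Fintype.card R : ℝ)) ≤ lam) :
    ∀ x : R → ℝ,
      x ≠ (fun _ => stubbornTarget ((∑ w, x₀ w) / (Fintype.card R : ℝ)) lam a k) →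
      stubbornObjective G x₀ lam a k
          (fun _ => stubbornTarget ((∑ w, x₀ w) / (Fintype.card R : ℝ)) lam a k)
        < stubbornObjective G x₀ lam a k x := by
  intro x hx
  classical
  have hne : Nonempty R := hG.nonempty
  have hnpos : (0:ℝ) < (Fintype.card R : ℝ) := by
    exact_mod_cast Fintype.card_pos
  set n : ℝ := (Fintype.card R : ℝ) with hn
  set m : ℝ := (∑ w, x₀ w) / n with hm
  set t : ℝ := lam * (k : ℝ) with htd
  have ht : 0 ≤ t := by positivity
  set T : ℝ := stubbornTarget m lam a k with hT
  set c : ℝ := (∑ v, x v) / n with hcdef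
  set u : R → ℝ := fun v => x₀ v - m with hu
  set y : R → ℝ := fun v => x v - c with hyv
  have hsumu : ∑ v, u v = 0 := by
    simp only [hu, Finset.sum_sub_distrib, Finset.sum_const, card_univ, nsmul_eq_mul, hm, ← hn]
    field_simp
    ring
  have hsumy : ∑ v, y v = 0 := by
    simp only [hyv, Finset.sum_sub_distrib, Finset.sum_const, card_univ, nsmul_eq_mul, hcdef, ← hn]
    field_simp
    ring
  -- quadratic decomposition for general x
  have hA : ∑ v, (x v - x₀ v)^2
      = ∑ v, (y v)^2 + (-2) * (∑ v, y v * u v) + ∑ v, (u v)^2 + n * (c-m)^2 := by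
    have hterm : ∀ v, (x v - x₀ v)^2
        = (y v)^2 + (-2)*(y v * u v) + (u v)^2 + (c-m)^2
          + (2*(c-m))*y v + (-(2*(c-m)))*u v := by
      intro v; simp only [hyv, hu]; ring
    rw [Finset.sum_congr rfl fun v _ => hterm v]
    simp only [Finset.sum_add_distrib, ← Finset.mul_sum, hsumy, hsumu,
      Finset.sum_const, card_univ, nsmul_eq_mul, mul_zero, ← hn]
    ring
  -- tv norm of x equals that of y
  have hTV : tvNorm G y = tvNorm G x := by
    rw [hyv]; exact tvNorm_sub_const G x c
  -- dual bound
  have hdual : ∑ v, y v * u v ≤ lam * tvNorm G y :=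
    sum_mul_le_dual G hG u y hsumy hlampos.le hlam
  -- abs sum bound
  have habs : n * |c - a| ≤ ∑ v, |x v - a| := by
    have h1 : |∑ v, (x v - a)| ≤ ∑ v, |x v - a| := Finset.abs_sum_le_sum_abs _ _
    have h2 : ∑ v, (x v - a) = n * (c - a) := by
      simp only [Finset.sum_sub_distrib, Finset.sum_const, card_univ, nsmul_eq_mul, ← hn]
      rw [hcdef]
      field_simp
    rw [h2, abs_mul, abs_of_pos hnpos] at h1
    exact h1
  -- lower bound for the objective at x
  have hlow : (1/2) * ∑ v, (y v)^2 + (1/2) * ∑ v, (u v)^2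
      + n * ((1/2)*(c-m)^2 + t*|c-a|) ≤ stubbornObjective G x₀ lam a k x := by
    unfold stubbornObjective
    rw [← htd, hA, ← hTV]
    have h3 : t * (n * |c - a|) ≤ t * ∑ v, |x v - a| :=
      mul_le_mul_of_nonneg_left habs ht
    nlinarith [hdual]
  -- exact value at the constant T
  have hval : stubbornObjective G x₀ lam a k (fun _ => T)
      = (1/2) * ∑ v, (u v)^2 + n * ((1/2)*(T-m)^2 + t*|T-a|) := by
    unfold stubbornObjective
    rw [← htd, tvNorm_const, mul_zero]
    have hterm : ∀ v : R, (T - x₀ v)^2 = (T-m)^2 + (-(2*(T-m)))*u v + (u v)^2 := by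
      intro v; simp only [hu]; ring
    rw [Finset.sum_congr rfl fun v _ => hterm v]
    simp only [Finset.sum_add_distrib, ← Finset.mul_sum, hsumu,
      Finset.sum_const, card_univ, nsmul_eq_mul, mul_zero, ← hn]
    ring
  -- the scalar function g
  have hgmin : ∀ d : ℝ, d ≠ T →
      (1/2)*(T-m)^2 + t*|T-a| < (1/2)*(d-m)^2 + t*|d-a| := by
    intro d hd
    rw [hT, htd]
    exact target_min m a lam k (htd ▸ ht) d (by rw [← hT]; exact hd)
  by_cases hy0 : ∀ v, y v = 0
  · -- x is constant c, with c ≠ T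
    have hcT : c ≠ T := by
      intro hcontra
      apply hx
      funext v
      have := hy0 v
      simp only [hyv] at this
      rw [← hcontra]
      linarith [this]
    have hsq : ∑ v, (y v)^2 = 0 :=
      Finset.sum_eq_zero fun v _ => by rw [hy0 v]; ring
    have := hgmin c hcT
    rw [hval]
    have hglt : n * ((1/2)*(T-m)^2 + t*|T-a|) < n * ((1/2)*(c-m)^2 + t*|c-a|) :=
      mul_lt_mul_of_pos_left this hnpos
    rw [hsq] at hlow
    linarith
  · push_neg at hy0
    obtain ⟨v₀, hv₀⟩ := hy0
    have hsq : 0 < ∑ v, (y v)^2 := by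
      apply Finset.sum_pos' (fun v _ => sq_nonneg _)
      exact ⟨v₀, Finset.mem_univ _, by positivity⟩
    have hgle : (1/2)*(T-m)^2 + t*|T-a| ≤ (1/2)*(c-m)^2 + t*|c-a| := by
      rcases eq_or_ne c T with h | h
      · rw [h]
      · exact le_of_lt (hgmin c h)
    have hgle' : n * ((1/2)*(T-m)^2 + t*|T-a|) ≤ n * ((1/2)*(c-m)^2 + t*|c-a|) :=
      mul_le_mul_of_nonneg_left hgle hnpos.le
    rw [hval]
    linarith
end
end

section
/- Let G=(V,E) be a finite connected d-regular graph and consider the ADMM iterations for the average-consensus problem f_v(x) = (1/2)(x − x₀(v))², i.e. x_{n+1}(v) minimizes the augmented Lagrangian in x given (z_n, η_n), with the multiplier antisymmetry η_n(v,w) = −η_n(w,v) and the identity z_n(v,w) + z_n(w,v) = x_n(v) + x_n(w). Then the network average is preserved: x̄_n = x̄₀ for all n ≥ 0. -/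
open Finset

noncomputable section

/-- Average preservation of the ADMM for average consensus on a `d`-regular
graph: given the multiplier antisymmetry `η_n(v,w) = -η_n(w,v)`, the identity
`z_n(v,w) + z_n(w,v) = x_n(v) + x_n(w)` on edges, and the first-order condition
of the `x`-update, the network average is preserved: `x̄_n = x̄₀` for all `n`. -/
theorem admm_average_preserved {V : Type*} [Fintype V] [DecidableEq V]
    (G : SimpleGraph V) [DecidableRel G.Adj] (hG : G.Connected)
    (d : ℕ) (hreg : ∀ v, G.degree v = d)
    (ρ : ℝ) (hρ : 0 < ρ) (x₀ : V → ℝ)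
    (x : ℕ → V → ℝ) (z η : ℕ → V → V → ℝ)
    (h0 : x 0 = x₀)
    (hanti : ∀ n v w, η n v w = -η n w v)
    (hz : ∀ n v w, G.Adj v w → z n v w + z n w v = x n v + x n w)
    (hfoc : ∀ n v,
      x (n + 1) v - x₀ v - (∑ w, if G.Adj v w then η n w v else 0)
        + ρ * (∑ w, if G.Adj v w then x (n + 1) v - z n w v else 0) = 0) :
    ∀ n, (∑ v, x n v) / (Fintype.card V : ℝ)
      = (∑ v, x₀ v) / (Fintype.card V : ℝ) := by
  suffices key : ∀ n, ∑ v, x n v = ∑ v, x₀ v by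
    intro n; rw [key n]
  have hdeg : ∀ (v : V) (c : ℝ), (∑ w, if G.Adj v w then c else 0) = (d : ℝ) * c := by
    intro v c
    rw [← Finset.sum_filter]
    rw [Finset.sum_const]
    have : (Finset.univ.filter (G.Adj v)).card = d := by
      rw [← SimpleGraph.neighborFinset_eq_filter, ← SimpleGraph.degree, hreg]
    rw [this, nsmul_eq_mul]
  intro n
  induction n with
  | zero => rw [h0]
  | succ n ih =>
    -- sum of FOC over v
    have H : ∑ v, (x (n + 1) v - x₀ v - (∑ w, if G.Adj v w then η n w v else 0)
        + ρ * (∑ w, if G.Adj v w then x (n + 1) v - z n w v else 0)) = 0 := by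
      simp [hfoc]
    have hA : (∑ v, ∑ w, if G.Adj v w then η n w v else 0) = 0 := by
      have h1 : (∑ v, ∑ w, if G.Adj v w then η n w v else 0)
          = ∑ v, ∑ w, if G.Adj v w then η n v w else 0 := by
        rw [Finset.sum_comm]
        refine Finset.sum_congr rfl fun v _ => Finset.sum_congr rfl fun w _ => ?_
        simp [G.adj_comm]
      have h2 : (∑ v, ∑ w, if G.Adj v w then η n v w else 0)
          = -∑ v, ∑ w, if G.Adj v w then η n w v else 0 := by
        rw [← Finset.sum_neg_distrib]
        refine Finset.sum_congr rfl fun v _ => ?_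
        rw [← Finset.sum_neg_distrib]
        refine Finset.sum_congr rfl fun w _ => ?_
        by_cases h : G.Adj v w <;> simp [h, hanti n v w]
      linarith [h1, h2]
    have hxw : ∀ m : ℕ, (∑ v, ∑ w, if G.Adj v w then x m w else 0)
        = (d : ℝ) * ∑ v, x m v := by
      intro m
      rw [Finset.sum_comm]
      rw [Finset.mul_sum]
      refine Finset.sum_congr rfl fun w _ => ?_
      rw [← hdeg w (x m w)]
      refine Finset.sum_congr rfl fun v _ => ?_
      simp [G.adj_comm]
    have hB : (∑ v, ∑ w, if G.Adj v w then z n w v else 0)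
        = (d : ℝ) * ∑ v, x n v := by
      have h1 : (∑ v, ∑ w, if G.Adj v w then z n w v else 0)
          = ∑ v, ∑ w, if G.Adj v w then z n v w else 0 := by
        rw [Finset.sum_comm]
        refine Finset.sum_congr rfl fun v _ => Finset.sum_congr rfl fun w _ => ?_
        simp [G.adj_comm]
      have h2 : (∑ v, ∑ w, if G.Adj v w then z n v w else 0)
          + (∑ v, ∑ w, if G.Adj v w then z n w v else 0)
          = (∑ v, ∑ w, if G.Adj v w then x n v else 0)
          + (∑ v, ∑ w, if G.Adj v w then x n w else 0) := by
        rw [← Finset.sum_add_distrib, ← Finset.sum_add_distrib]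
        refine Finset.sum_congr rfl fun v _ => ?_
        rw [← Finset.sum_add_distrib, ← Finset.sum_add_distrib]
        refine Finset.sum_congr rfl fun w _ => ?_
        by_cases h : G.Adj v w
        · simp [h, hz n v w h]
        · simp [h]
      have h3 : (∑ v, ∑ w, if G.Adj v w then x n v else 0)
          = (d : ℝ) * ∑ v, x n v := by
        rw [Finset.mul_sum]
        exact Finset.sum_congr rfl fun v _ => hdeg v (x n v)
      linarith [h1, h2, h3, hxw n]
    have hC : (∑ v, ∑ w, if G.Adj v w then x (n + 1) v else 0)
        = (d : ℝ) * ∑ v, x (n + 1) v := by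
      rw [Finset.mul_sum]
      exact Finset.sum_congr rfl fun v _ => hdeg v (x (n + 1) v)
    have hD : (∑ v, ∑ w, if G.Adj v w then x (n + 1) v - z n w v else 0)
        = (∑ v, ∑ w, if G.Adj v w then x (n + 1) v else 0)
          - (∑ v, ∑ w, if G.Adj v w then z n w v else 0) := by
      rw [← Finset.sum_sub_distrib]
      refine Finset.sum_congr rfl fun v _ => ?_
      rw [← Finset.sum_sub_distrib]
      refine Finset.sum_congr rfl fun w _ => ?_
      by_cases h : G.Adj v w <;> simp [h]
    rw [Finset.sum_add_distrib, Finset.sum_sub_distrib, Finset.sum_sub_distrib,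
      ← Finset.mul_sum, hD, hA, hB, hC, ih] at H
    have H2 := H
    have hd : (0 : ℝ) ≤ (d : ℝ) := Nat.cast_nonneg d
    have hpos : (0 : ℝ) < 1 + ρ * d := by positivity
    have hkey : (1 + ρ * (d : ℝ)) * ((∑ v, x (n + 1) v) - (∑ v, x₀ v)) = 0 := by
      ring_nf
      ring_nf at H2
      linarith [H2]
    rcases mul_eq_zero.mp hkey with h | h
    · linarith
    · linarith
end
end
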